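/- Let n be coprime to 3. Every ideal of the quotient ring R[X]/(Xⁿ - 1), where R = ℤ₉[u]/(u²-u), is principal. -/

import Mathlib

open Polynomial

set_option maxHeartbeats 1000000
set_option synthInstance.maxHeartbeats 400000

noncomputable section

/-- The ring `R = ℤ₉[u]/(u² - u)`. -/
abbrev R9 : Type := Polynomial (ZMod 9) ⧸ Ideal.span {(X : Polynomial (ZMod 9)) ^ 2 - X}

instance : CommRing R9 := Ideal.Quotient.commRing _

/-- The element `u` of `R`, the image of `X`. -/
def uu : R9 := Ideal.Quotient.mk _ (X : Polynomial (ZMod 9))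

/-- The canonical embedding `ℤ₉ → R`. -/
def ι : ZMod 9 →+* R9 :=
  (Ideal.Quotient.mk _).comp (Polynomial.C : ZMod 9 →+* Polynomial (ZMod 9))
/-- The quotient ring `R[X]/(Xⁿ - 1)`. -/
abbrev Rn (n : ℕ) : Type := Polynomial R9 ⧸ Ideal.span {(X : Polynomial R9) ^ n - 1}

/-- In a commutative semisimple ring, every ideal is generated by an idempotent. -/
lemma exists_idem_gen {S : Type*} [CommRing S] [IsSemisimpleRing S] (J : Ideal S) :
    ∃ e : S, IsIdempotentElem e ∧ J = Ideal.span {e} := by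
  obtain ⟨K, hK⟩ := exists_isCompl J
  have h1 : (1 : S) ∈ J ⊔ K := by rw [hK.sup_eq_top]; trivial
  obtain ⟨e, he, k, hk, hek⟩ := Submodule.mem_sup.mp h1
  have key : ∀ a ∈ J, a * k = 0 := by
    intro a ha
    have h2 : a * k ∈ J ⊓ K := ⟨J.mul_mem_right _ ha, K.mul_mem_left _ hk⟩
    rwa [hK.inf_eq_bot, Ideal.mem_bot] at h2
  have hidem : IsIdempotentElem e := by
    have := key e he
    have : e * (e + k) = e * e + 0 := by rw [mul_add, this]
    rw [hek, mul_one, add_zero] at this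
    exact this.symm
  refine ⟨e, hidem, le_antisymm ?_ ?_⟩
  · intro a ha
    have : a * (e + k) = a * e + 0 := by rw [mul_add, key a ha]
    rw [hek, mul_one, add_zero] at this
    rw [this]
    exact Ideal.mem_span_singleton'.mpr ⟨a, rfl⟩
  · rw [Ideal.span_le, Set.singleton_subset_iff]; exact he

/-- If `t² = 0` and `A/(t)` is semisimple, then `A` is a principal ideal ring. -/
lemma pir_of_sq_zero {A : Type*} [CommRing A] (t : A) (ht : t * t = 0)
    (hss : IsSemisimpleRing (A ⧸ Ideal.span {t})) (I : Ideal A) :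
    Submodule.IsPrincipal I := by
  set N : Ideal A := Ideal.span {t} with hN
  set π : A →+* A ⧸ N := Ideal.Quotient.mk N with hπ
  have hπs : Function.Surjective π := Ideal.Quotient.mk_surjective
  -- kernel facts
  have hker : ∀ a : A, π a = 0 → ∃ c, a = c * t := by
    intro a ha
    have : a ∈ N := by rwa [← Ideal.Quotient.eq_zero_iff_mem]
    obtain ⟨c, hc⟩ := Ideal.mem_span_singleton'.mp this
    exact ⟨c, hc.symm⟩
  -- idempotent generator of the image of I
  obtain ⟨ebar, hebar, hIbar⟩ := exists_idem_gen (I.map π)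
  have hebar_mem : ebar ∈ I.map π := by rw [hIbar]; exact Ideal.subset_span rfl
  obtain ⟨x, hxI, hxe⟩ := (Ideal.mem_map_iff_of_surjective π hπs).mp hebar_mem
  -- lift the idempotent
  have hx2 : (x - x ^ 2) ^ 2 = 0 := by
    obtain ⟨c, hc⟩ := hker (x - x ^ 2) (by
      rw [map_sub, map_pow, hxe, sq, hebar.eq, sub_self])
    linear_combination (x - x ^ 2 + c * t) * hc + c * c * ht
  set e : A := 1 - (1 - x ^ 2) ^ 2 with hedef
  have he : IsIdempotentElem e := isIdempotentElem_one_sub_one_sub_pow_pow x 2 hx2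
  have heI : e ∈ I := by
    have : e = x * (x * (2 - x ^ 2)) := by rw [hedef]; ring
    rw [this]
    exact I.mul_mem_right _ hxI
  have hπe : π e = ebar := by
    have h1 : π e = 1 - (1 - ebar ^ 2) ^ 2 := by
      rw [hedef]; simp only [map_sub, map_one, map_pow, hxe]
    rw [h1]
    have h2 := hebar.eq
    linear_combination (-(ebar^2) - ebar + 1) * h2
  -- the colon ideal
  set I' : Ideal A := I.colon (Ideal.span {t}) with hI'
  have hmemI' : ∀ a : A, a ∈ I' ↔ a * t ∈ I := by
    intro a
    rw [hI']
    show a ∈ Submodule.colon I (Submodule.span A {t}) ↔ _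
    rw [Submodule.mem_colon_span_singleton, smul_eq_mul]
  haveI := hss
  obtain ⟨bbar, hbbar⟩ := IsPrincipalIdealRing.principal (I'.map π)
  have hbbar_mem : bbar ∈ I'.map π := by rw [hbbar]; exact Ideal.subset_span rfl
  obtain ⟨b, hbI', hbe⟩ := (Ideal.mem_map_iff_of_surjective π hπs).mp hbbar_mem
  have key2 : ∀ a ∈ I', ∃ c, a * t = c * (b * t) := by
    intro a ha
    have h3 := Ideal.mem_map_of_mem π ha
    rw [hbbar] at h3
    obtain ⟨cbar, hcbar⟩ := Submodule.mem_span_singleton.mp h3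
    rw [smul_eq_mul] at hcbar
    obtain ⟨c, rfl⟩ := hπs cbar
    obtain ⟨d, hd⟩ := hker (a - c * b) (by rw [map_sub, map_mul, hbe, hcbar, sub_self])
    refine ⟨c, ?_⟩
    linear_combination t * hd + d * ht
  -- the generator
  set g : A := e + (b * t) * (1 - e) with hg
  have hbtI : b * t ∈ I := (hmemI' b).mp hbI'
  have hgI : g ∈ I := I.add_mem heI (I.mul_mem_right _ hbtI)
  have hge : e = g * e := by
    have h2 := he.eq
    rw [hg]; linear_combination (b * t - 1) * h2
  refine ⟨⟨g, le_antisymm ?_ ?_⟩⟩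
  · intro y hy
    have h3 : π y ∈ Ideal.span {ebar} := by
      rw [← hIbar]; exact Ideal.mem_map_of_mem π hy
    obtain ⟨cbar, hcbar⟩ := Ideal.mem_span_singleton'.mp h3
    obtain ⟨c, rfl⟩ := hπs cbar
    obtain ⟨d, hd⟩ := hker (y - c * e) (by rw [map_sub, map_mul, hπe, hcbar, sub_self])
    have hdI' : d ∈ I' := by
      rw [hmemI']
      have : d * t = y - c * e := hd.symm
      rw [this]
      exact I.sub_mem hy (I.mul_mem_left _ heI)
    obtain ⟨c₂, hc₂⟩ := key2 d hdI'
    -- y = y * e + c₂ * (g - g * e)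
    have hy_eq : y = y * e + c₂ * (g - g * e) := by
      have h2 := he.eq
      -- y(1-e) = d t (1-e) = c₂ b t (1-e) = c₂ (g - e) = c₂ (g - g e)
      have e1 : y * (1 - e) = d * t * (1 - e) := by linear_combination (1 - e) * hd - c * h2
      have e2 : g - g * e = b * t * (1 - e) := by rw [hg]; linear_combination (b * t - 1) * h2
      rw [e2]
      linear_combination e1 + (1 - e) * hc₂
    rw [hy_eq]
    refine Ideal.add_mem _ ?_ ?_
    · refine Ideal.mem_span_singleton'.mpr ⟨y * e, ?_⟩
      linear_combination (-y) * hge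
    · exact Ideal.mul_mem_left _ _ (Ideal.sub_mem _ (Ideal.subset_span rfl)
        (Ideal.mul_mem_right _ _ (Ideal.subset_span rfl)))
  · exact (Submodule.span_singleton_le_iff_mem g I).mpr hgI

/-- The field quotient `F₃[X]/(Xⁿ-1)`. -/
abbrev Ffld (n : ℕ) : Type := AdjoinRoot ((X : Polynomial (ZMod 3)) ^ n - 1)

def h93 : ZMod 9 →+* ZMod 3 := ZMod.castHom (show (3:ℕ) ∣ 9 by norm_num) (ZMod 3)

lemma uu_mul_self : uu * uu = uu := by
  show Ideal.Quotient.mk _ _ * Ideal.Quotient.mk _ _ = Ideal.Quotient.mk _ _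
  rw [← map_mul, Ideal.Quotient.eq]
  exact Ideal.subset_span (by rw [← sq]; rfl)

/-- `R9 → ZMod 3` sending `u` to `c`, for an idempotent `c`. -/
def φR (c : ZMod 3) (hc : c * c = c) : R9 →+* ZMod 3 :=
  Ideal.Quotient.lift _ (eval₂RingHom h93 c) <| by
    intro a ha
    obtain ⟨q, hq⟩ := Ideal.mem_span_singleton'.mp ha
    rw [← hq, map_mul]
    have h0 : eval₂RingHom h93 c ((X : Polynomial (ZMod 9)) ^ 2 - X) = 0 := by
      rw [coe_eval₂RingHom, eval₂_sub, eval₂_pow, eval₂_X, sq, hc, sub_self]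
    rw [h0, mul_zero]

lemma φR_uu (c : ZMod 3) (hc : c * c = c) : φR c hc uu = c := by
  show Ideal.Quotient.lift _ _ _ (Ideal.Quotient.mk _ _) = c
  rw [Ideal.Quotient.lift_mk]
  simp

variable (n : ℕ)

lemma root_pow_sub_one : (AdjoinRoot.root ((X : Polynomial (ZMod 3)) ^ n - 1)) ^ n - 1 = 0 := by
  have h := AdjoinRoot.mk_self (f := (X : Polynomial (ZMod 3)) ^ n - 1)
  rwa [map_sub, map_pow, AdjoinRoot.mk_X, map_one] at h

/-- `Rn n → Ffld n` sending `u ↦ c`, `X ↦ root`. -/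
def Φh (c : ZMod 3) (hc : c * c = c) : Rn n →+* Ffld n :=
  Ideal.Quotient.lift _
    (eval₂RingHom ((AdjoinRoot.of _).comp (φR c hc)) (AdjoinRoot.root _)) <| by
    intro a ha
    obtain ⟨q, hq⟩ := Ideal.mem_span_singleton'.mp ha
    rw [← hq, map_mul]
    have h0 : eval₂RingHom ((AdjoinRoot.of ((X : Polynomial (ZMod 3)) ^ n - 1)).comp (φR c hc))
        (AdjoinRoot.root ((X : Polynomial (ZMod 3)) ^ n - 1))
        ((X : Polynomial R9) ^ n - 1) = 0 := by
      rw [coe_eval₂RingHom, eval₂_sub, eval₂_pow, eval₂_X, eval₂_one]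
      exact root_pow_sub_one n
    rw [h0, mul_zero]

/-- `u` as an element of `Rn n`. -/
def ub : Rn n := Ideal.Quotient.mk _ (C uu)

/-- The ideal `(3, u - c)`. -/
def Jc (c : ZMod 3) : Ideal (Rn n) := Ideal.span {(3 : Rn n), ub n - ((c.val : ℕ) : Rn n)}

lemma three_mem_Jc (c : ZMod 3) : (3 : Rn n) ∈ Jc n c :=
  Ideal.subset_span (Set.mem_insert _ _)

lemma ub_sub_mem_Jc (c : ZMod 3) : ub n - ((c.val : ℕ) : Rn n) ∈ Jc n c :=
  Ideal.subset_span (Set.mem_insert_of_mem _ rfl)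

lemma Φh_ub (c : ZMod 3) (hc : c * c = c) :
    Φh n c hc (ub n) = AdjoinRoot.of _ c := by
  show Ideal.Quotient.lift _ _ _ (Ideal.Quotient.mk _ _) = _
  rw [Ideal.Quotient.lift_mk]
  simp [φR_uu c hc]

lemma Φh_three (c : ZMod 3) (hc : c * c = c) : Φh n c hc (3 : Rn n) = 0 := by
  have h0 : ((3 : ℕ) : ZMod 3) = 0 := by decide
  have h1 : ((3 : ℕ) : Ffld n) = 0 := by
    rw [← map_natCast (algebraMap (ZMod 3) (Ffld n)) 3, h0, map_zero]
  have h2 := map_natCast (Φh n c hc) 3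
  push_cast at h2
  rw [h2]
  exact_mod_cast h1

lemma Φh_Jc (c : ZMod 3) (hc : c * c = c) : ∀ a ∈ Jc n c, Φh n c hc a = 0 := by
  intro a ha
  have hle : Jc n c ≤ RingHom.ker (Φh n c hc) := by
    rw [Jc, Ideal.span_le, Set.insert_subset_iff, Set.singleton_subset_iff]
    constructor
    · exact RingHom.mem_ker.mpr (Φh_three n c hc)
    · rw [SetLike.mem_coe, RingHom.mem_ker, map_sub, Φh_ub n c hc, map_natCast (Φh n c hc) c.val,
        ← map_natCast (AdjoinRoot.of _) c.val, ZMod.natCast_val, ZMod.cast_id, sub_self]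
  exact RingHom.mem_ker.mp (hle ha)

instance Jc_twoSided (c : ZMod 3) : (Jc n c).IsTwoSided :=
  @Ideal.instIsTwoSided_1 _ (Ideal.Quotient.commRing _) (Jc n c)

abbrev Tq (c : ZMod 3) : Type _ := Rn n ⧸ Jc n c

instance (c : ZMod 3) : CommRing (Tq n c) :=
  @Ideal.Quotient.commRing _ (Ideal.Quotient.commRing _) (Jc n c)

def Φbar (c : ZMod 3) (hc : c * c = c) : Tq n c →+* Ffld n :=
  Ideal.Quotient.lift _ (Φh n c hc) (Φh_Jc n c hc)

lemma three_Tq (c : ZMod 3) : (3 : Tq n c) = 0 := by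
  rw [(map_ofNat (Ideal.Quotient.mk (Jc n c)) 3).symm, Ideal.Quotient.eq_zero_iff_mem]
  exact three_mem_Jc n c

/-- base map `ZMod 3 → Tq`. -/
def baseT (c : ZMod 3) : ZMod 3 →+* Tq n c :=
  (Ideal.Quotient.lift (Ideal.span {((3 : ℕ) : ℤ)}) (Int.castRingHom _) (by
    intro a ha
    obtain ⟨q, hq⟩ := Ideal.mem_span_singleton'.mp ha
    have : ((a : ℤ) : Tq n c) = ((q : ℤ) : Tq n c) * ((3:ℤ) : Tq n c) := by
      rw [← hq]; push_cast; ring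
    rw [eq_intCast (Int.castRingHom (Tq n c)) a, this]
    push_cast
    rw [three_Tq n c, mul_zero])).comp
   (Int.quotientSpanNatEquivZMod 3).symm.toRingHom

/-- the image of `X` in `Rn`. -/
def xR : Rn n := Ideal.Quotient.mk (Ideal.span {(X : Polynomial R9) ^ n - 1}) X

/-- the image of `X` in `Tq`. -/
def xT (c : ZMod 3) : Tq n c := Ideal.Quotient.mk (Jc n c) (xR n)

lemma xR_pow : (xR n) ^ n - 1 = 0 := by
  rw [xR, ← map_pow, ← map_one (Ideal.Quotient.mk (Ideal.span {(X : Polynomial R9) ^ n - 1})),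
    ← map_sub, Ideal.Quotient.eq_zero_iff_mem]
  exact Ideal.subset_span rfl

lemma xT_pow (c : ZMod 3) : (xT n c) ^ n - 1 = 0 := by
  rw [xT, ← map_pow, ← map_one (Ideal.Quotient.mk (Jc n c)), ← map_sub, xR_pow, map_zero]

def Ψh (c : ZMod 3) : Ffld n →+* Tq n c :=
  AdjoinRoot.lift (baseT n c) (xT n c) (by
    rw [eval₂_sub, eval₂_pow, eval₂_X, eval₂_one]
    exact xT_pow n c)

variable (c : ZMod 3) (hc : c * c = c)

lemma Ψh_root : Ψh n c (AdjoinRoot.root _) = xT n c := AdjoinRoot.lift_root _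

lemma Ψh_of (x : ZMod 3) : Ψh n c (AdjoinRoot.of _ x) = baseT n c x := AdjoinRoot.lift_of _

lemma Φbar_xT : Φbar n c hc (xT n c) = AdjoinRoot.root _ := by
  rw [xT, Φbar, Ideal.Quotient.lift_mk, xR]
  show eval₂ _ _ X = _
  rw [eval₂_X]

lemma comp1 : (Φbar n c hc).comp (Ψh n c) = RingHom.id (Ffld n) := by
  refine Ideal.Quotient.ringHom_ext ?_
  refine Polynomial.ringHom_ext' ?_ ?_
  · exact RingHom.ext_zmod _ _
  · show Φbar n c hc (Ψh n c (Ideal.Quotient.mk _ X)) = Ideal.Quotient.mk _ X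
    rw [show (Ideal.Quotient.mk _ (X : Polynomial (ZMod 3))) = AdjoinRoot.root _ from
      AdjoinRoot.mk_X, Ψh_root, Φbar_xT]

lemma baseT_eq : baseT n c c = Ideal.Quotient.mk (Jc n c) (ub n) := by
  have h1 : (((c.val : ℕ)) : ZMod 3) = c := by rw [ZMod.natCast_val, ZMod.cast_id]
  have h2 := map_natCast (baseT n c) c.val
  rw [h1] at h2
  rw [h2, ← map_natCast (Ideal.Quotient.mk (Jc n c)) c.val, Ideal.Quotient.eq]
  have := (Jc n c).neg_mem (ub_sub_mem_Jc n c)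
  simpa using this

lemma comp2 : (Ψh n c).comp (Φbar n c hc) = RingHom.id (Tq n c) := by
  refine Ideal.Quotient.ringHom_ext ?_
  refine Ideal.Quotient.ringHom_ext ?_
  refine Polynomial.ringHom_ext' ?_ ?_
  · -- coefficients in R9
    refine Ideal.Quotient.ringHom_ext ?_
    refine Polynomial.ringHom_ext' ?_ ?_
    · exact RingHom.ext_zmod _ _
    · show Ψh n c (Φbar n c hc
          (Ideal.Quotient.mk _ (Ideal.Quotient.mk _ (C (Ideal.Quotient.mk _ X)))))
        = Ideal.Quotient.mk _ (Ideal.Quotient.mk _ (C (Ideal.Quotient.mk _ X)))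
      have hΦ : Φbar n c hc (Ideal.Quotient.mk _ (Ideal.Quotient.mk _ (C (Ideal.Quotient.mk _ X))))
          = AdjoinRoot.of _ c := by
        rw [Φbar, Ideal.Quotient.lift_mk, Φh, Ideal.Quotient.lift_mk]
        show eval₂ _ _ (C _) = _
        rw [eval₂_C]
        show AdjoinRoot.of _ (φR c hc uu) = _
        rw [φR_uu]
      rw [hΦ, Ψh_of, baseT_eq]
      rfl
  · show Ψh n c (Φbar n c hc (Ideal.Quotient.mk _ (Ideal.Quotient.mk _ X)))
      = Ideal.Quotient.mk _ (Ideal.Quotient.mk _ X)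
    have hΦ : Φbar n c hc (Ideal.Quotient.mk _ (Ideal.Quotient.mk _ (X : Polynomial R9)))
        = AdjoinRoot.root _ := by
      rw [Φbar, Ideal.Quotient.lift_mk, Φh, Ideal.Quotient.lift_mk]
      show eval₂ _ _ X = _
      rw [eval₂_X]
    rw [hΦ, Ψh_root]
    rfl

/-- `Tq n c` is isomorphic to `F₃[X]/(Xⁿ-1)`. -/
def TqEquiv : Tq n c ≃+* Ffld n := RingEquiv.ofRingHom (Φbar n c hc) (Ψh n c)
  (comp1 n c hc) (comp2 n c hc)


lemma ffld_squarefree (hn3 : (n : ZMod 3) ≠ 0) :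
    Squarefree ((X : Polynomial (ZMod 3)) ^ n - 1) := by
  have h := Polynomial.separable_X_pow_sub_C (1 : ZMod 3) hn3 one_ne_zero
  rw [Polynomial.C_1] at h
  exact h.squarefree

lemma ffld_reduced (hn3 : (n : ZMod 3) ≠ 0) : IsReduced (Ffld n) := by
  constructor
  intro x hx
  obtain ⟨k, hk⟩ := hx
  obtain ⟨p, rfl⟩ := AdjoinRoot.mk_surjective x
  rcases Nat.eq_zero_or_pos k with rfl | hkpos
  · rw [pow_zero] at hk
    calc AdjoinRoot.mk _ p = AdjoinRoot.mk _ p * 1 := (mul_one _).symm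
    _ = 0 := by rw [hk, mul_zero]
  · rw [← map_pow, AdjoinRoot.mk_eq_zero] at hk
    rw [AdjoinRoot.mk_eq_zero]
    exact ((ffld_squarefree n hn3).dvd_pow_iff_dvd hkpos.ne').mp hk

lemma ffld_monic (hn0 : n ≠ 0) : ((X : Polynomial (ZMod 3)) ^ n - 1).Monic := by
  have := Polynomial.monic_X_pow_sub_C (1 : ZMod 3) hn0
  rwa [Polynomial.C_1] at this

lemma ffld_artinian (hn0 : n ≠ 0) : IsArtinianRing (Ffld n) := by
  have pb := AdjoinRoot.powerBasis (ffld_monic n hn0).ne_zero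
  haveI : Module.Finite (ZMod 3) (Ffld n) := Module.Finite.of_basis pb.basis
  exact IsArtinianRing.of_finite (ZMod 3) (Ffld n)

lemma ffld_ss (hn0 : n ≠ 0) (hn3 : (n : ZMod 3) ≠ 0) : IsSemisimpleRing (Ffld n) := by
  haveI := ffld_reduced n hn3
  haveI := ffld_artinian n hn0
  exact IsArtinianRing.isSemisimpleRing_of_isReduced (Ffld n)

lemma ub_mul_self : ub n * ub n = ub n := by
  rw [ub, ← map_mul, ← map_mul, uu_mul_self]

lemma nine_zero : (9 : Rn n) = 0 := by
  have h0 : ((9 : ℕ) : ZMod 9) = 0 := by decide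
  have h1 : ((9 : ℕ) : Rn n) = 0 := by
    set ρ : ZMod 9 →+* Rn n :=
      (((Ideal.Quotient.mk (Ideal.span {(X : Polynomial R9) ^ n - 1})).comp
        (C : R9 →+* Polynomial R9)).comp
        ((Ideal.Quotient.mk (Ideal.span {(X : Polynomial (ZMod 9)) ^ 2 - X})).comp
        (C : ZMod 9 →+* Polynomial (ZMod 9)))) with hρ
    rw [← map_natCast ρ 9, h0, map_zero]
  exact_mod_cast h1

lemma three_sq : (3 : Rn n) * 3 = 0 := by
  rw [← nine_zero n]; norm_num

lemma val_one_cast : (((1 : ZMod 3).val : ℕ) : Rn n) = 1 := by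
  rw [ZMod.val_one]; norm_num

lemma val_zero_cast : (((0 : ZMod 3).val : ℕ) : Rn n) = 0 := by
  rw [ZMod.val_zero]; norm_num

section RnSec

abbrev RnCR (n : ℕ) : CommRing (Rn n) := Ideal.Quotient.commRing _

attribute [local instance] RnCR

lemma Jc_coprime : IsCoprime (Jc n 1) (Jc n 0) := by
  rw [Ideal.isCoprime_iff_sup_eq, Ideal.eq_top_iff_one]
  refine Submodule.mem_sup.mpr ⟨-(ub n - 1), ?_, ub n, ?_, by ring⟩
  · refine (Jc n 1).neg_mem ?_
    have := ub_sub_mem_Jc n 1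
    rwa [val_one_cast] at this
  · have := ub_sub_mem_Jc n 0
    rwa [val_zero_cast, sub_zero] at this

lemma span_three_eq : Ideal.span {(3 : Rn n)} = Jc n 1 ⊓ Jc n 0 := by
  refine le_antisymm ?_ ?_
  · rw [Ideal.span_le, Set.singleton_subset_iff]
    exact ⟨three_mem_Jc n 1, three_mem_Jc n 0⟩
  · rw [Ideal.inf_eq_mul_of_isCoprime (Jc_coprime n), Jc, Jc,
      Ideal.span_pair_mul_span_pair, Ideal.span_le]
    intro x hx
    simp only [Set.mem_insert_iff, Set.mem_singleton_iff] at hx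
    rcases hx with rfl | rfl | rfl | rfl
    · rw [three_sq n]; exact (Ideal.span {(3 : Rn n)}).zero_mem
    · exact Ideal.mem_span_singleton'.mpr ⟨ub n - (((0 : ZMod 3).val : ℕ) : Rn n), mul_comm _ _⟩
    · exact Ideal.mem_span_singleton'.mpr ⟨ub n - (((1 : ZMod 3).val : ℕ) : Rn n), rfl⟩
    · have : (ub n - (((1 : ZMod 3).val : ℕ) : Rn n)) * (ub n - (((0 : ZMod 3).val : ℕ) : Rn n))
          = 0 := by
        rw [val_one_cast, val_zero_cast, sub_zero, sub_mul, one_mul, ub_mul_self, sub_self]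
      rw [this]; exact (Ideal.span {(3 : Rn n)}).zero_mem

lemma Q_ss (hn0 : n ≠ 0) (hn3 : (n : ZMod 3) ≠ 0) :
    IsSemisimpleRing (Rn n ⧸ Ideal.span {(3 : Rn n)}) := by
  haveI hF := ffld_ss n hn0 hn3
  haveI h1 : IsSemisimpleRing (Tq n 1) := (TqEquiv n 1 (by decide)).symm.isSemisimpleRing
  haveI h0 : IsSemisimpleRing (Tq n 0) := (TqEquiv n 0 (by decide)).symm.isSemisimpleRing
  have E : (Rn n ⧸ Ideal.span {(3 : Rn n)}) ≃+* (Tq n 1) × (Tq n 0) :=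
    (Ideal.quotEquivOfEq (span_three_eq n)).trans
      (Ideal.quotientInfEquivQuotientProd _ _ (Jc_coprime n))
  exact E.symm.isSemisimpleRing

end RnSec

theorem stmt13 (n : ℕ) (hn : Nat.Coprime n 3) (I : Ideal (Rn n)) :
    Submodule.IsPrincipal I := by
  have hn0 : n ≠ 0 := by rintro rfl; exact absurd hn (by decide)
  have hn3 : (n : ZMod 3) ≠ 0 := by
    rw [Ne, ZMod.natCast_eq_zero_iff]
    intro h
    have h2 : 3 ∣ Nat.gcd n 3 := Nat.dvd_gcd h dvd_rfl
    rw [Nat.Coprime] at hn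
    rw [hn] at h2
    exact absurd h2 (by norm_num)
  exact @pir_of_sq_zero (Rn n) (RnCR n) 3 (three_sq n) (Q_ss n hn0 hn3) I

end
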